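/- Let 0 < q < 1 and let (k,l,m) be an admissible triple with k = l + m − 2r, 0 ≤ r ≤ min(l,m). Then [k+1]_q/θ_q(k,l,m) ≤ (1/[r+1]_q) · (∏_{s=1}^{∞} 1/(1 − q^{2s}))³, and in particular [k+1]_q/θ_q(k,l,m) ≤ C(q)² · q^{(l+m−k)/2}, where C(q)² := (1 − q²)^{−1} (∏_{s=1}^{∞} 1/(1 − q^{2s}))³. -/

import Mathlib

open Finset

/-- The quantum integer [n]_q = (q^{-n} - q^n)/(q^{-1} - q), with [0]_q = 0. -/
noncomputable def qint (q : ℝ) (n : ℕ) : ℝ :=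
  (q ^ (-(n : ℤ)) - q ^ (n : ℤ)) / (q⁻¹ - q)

/-- The quantum factorial [n]_q!. -/
noncomputable def qfact (q : ℝ) (n : ℕ) : ℝ :=
  ∏ i ∈ Finset.range n, qint q (i + 1)

/-- The theta-net θ_q(k,l,m) where k = l + m - 2r. -/
noncomputable def qtheta (q : ℝ) (k l m r : ℕ) : ℝ :=
  (qfact q r * qfact q (l - r) * qfact q (m - r) * qfact q (k + r + 1)) /
    (qfact q l * qfact q m * qfact q k)

private lemma one_le_inv'' {x : ℝ} (h0 : 0 < x) (h1 : x ≤ 1) : 1 ≤ x⁻¹ := by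
  nlinarith [mul_inv_cancel₀ h0.ne', mul_nonneg (sub_nonneg.mpr h1) (inv_pos.mpr h0).le]

/-- Finite products are below the infinite product, for real factors `≥ 1`. -/
private lemma prod_le_tprod_real {f : ℕ → ℝ} (s : Finset ℕ) (h1 : ∀ i, 1 ≤ f i)
    (hf : Multipliable f) : ∏ i ∈ s, f i ≤ ∏' i, f i := by
  refine ge_of_tendsto hf.hasProd (Filter.eventually_atTop.2 ⟨s, fun t hst => ?_⟩)
  rw [← Finset.prod_sdiff hst]
  have h0 : 0 ≤ ∏ i ∈ s, f i := Finset.prod_nonneg fun i _ => le_trans zero_le_one (h1 i)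
  have hb : 1 ≤ ∏ i ∈ t \ s, f i := by
    calc (1:ℝ) = ∏ _i ∈ t \ s, 1 := by simp
      _ ≤ ∏ i ∈ t \ s, f i :=
        Finset.prod_le_prod (by intro i _; norm_num) (fun i _ => h1 i)
  exact le_mul_of_one_le_left h0 hb

lemma qint_formula {q : ℝ} (h0 : 0 < q) (h1 : q < 1) (n : ℕ) :
    qint q (n + 1) = ((1 - (q ^ 2) ^ (n + 1)) / (1 - q ^ 2)) / q ^ n := by
  have hq : q ≠ 0 := h0.ne'
  have h2 : (1 : ℝ) - q ^ 2 ≠ 0 := by nlinarith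
  have hqq : q⁻¹ - q = (1 - q ^ 2) / q := by field_simp
  rw [qint, zpow_neg, zpow_natCast, hqq]
  have hp : q ^ (n + 1) ≠ 0 := pow_ne_zero _ hq
  have hp2 : q ^ n ≠ 0 := pow_ne_zero _ hq
  rw [div_div, div_eq_div_iff (div_ne_zero h2 hq) (mul_ne_zero h2 hp2)]
  field_simp
  ring

lemma qint_pos {q : ℝ} (h0 : 0 < q) (h1 : q < 1) (n : ℕ) : 0 < qint q (n + 1) := by
  rw [qint_formula h0 h1]
  have h2 : (0:ℝ) < 1 - q ^ 2 := by nlinarith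
  have h3 : (q ^ 2) ^ (n + 1) < 1 := by
    apply pow_lt_one₀ (by positivity) (by nlinarith) (Nat.succ_ne_zero n)
  have h4 : (0:ℝ) < 1 - (q ^ 2) ^ (n + 1) := by linarith
  positivity

lemma qfact_pos {q : ℝ} (h0 : 0 < q) (h1 : q < 1) (n : ℕ) : 0 < qfact q n :=
  Finset.prod_pos fun i _ => qint_pos h0 h1 i

lemma qfact_add (q : ℝ) (a b : ℕ) :
    qfact q (a + b) = qfact q a * ∏ x ∈ Finset.range b, qint q (a + x + 1) := by
  simp [qfact, Finset.prod_range_add]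

theorem theta_ratio_upper_bounds (q : ℝ) (h0 : 0 < q) (h1 : q < 1)
    (k l m r : ℕ) (hr : r ≤ min l m) (hk : k + 2 * r = l + m) :
    qint q (k + 1) / qtheta q k l m r ≤
      (1 / qint q (r + 1)) * (∏' s : ℕ, (1 - q ^ (2 * (s + 1)))⁻¹) ^ 3 ∧
    qint q (k + 1) / qtheta q k l m r ≤
      ((1 - q ^ 2)⁻¹ * (∏' s : ℕ, (1 - q ^ (2 * (s + 1)))⁻¹) ^ 3) *
        q ^ ((l + m - k) / 2) := by
  obtain ⟨l', rfl⟩ : ∃ l', l = l' + r := ⟨l - r, by omega⟩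
  obtain ⟨m', rfl⟩ : ∃ m', m = m' + r := ⟨m - r, by omega⟩
  obtain rfl : k = l' + m' := by omega
  have hq : q ≠ 0 := h0.ne'
  have ht0 : (0:ℝ) < q ^ 2 := by positivity
  have ht1 : q ^ 2 < 1 := by nlinarith
  set t := q ^ 2 with htdef
  have htne : (1:ℝ) - t ≠ 0 := by nlinarith
  have htn : ∀ n : ℕ, t ^ (n + 1) < 1 := fun n => pow_lt_one₀ ht0.le ht1 (Nat.succ_ne_zero n)
  have htn0 : ∀ n : ℕ, (0:ℝ) < t ^ (n + 1) := fun n => pow_pos ht0 _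
  set u : ℕ → ℝ := fun j => (1 - t ^ (j + 1))⁻¹ with hudef
  have hupos : ∀ j, 0 < u j := fun j => inv_pos.mpr (by linarith [htn j])
  have hu1 : ∀ j, 1 ≤ u j := fun j =>
    one_le_inv'' (by linarith [htn j]) (by linarith [htn0 j])
  -- multipliability of u
  have humul : Multipliable u := by
    refine Real.multipliable_of_summable_log hupos ?_
    have hgeo : Summable fun n : ℕ => (t / (1 - t)) * t ^ n :=
      (summable_geometric_of_lt_one ht0.le ht1).mul_left _
    refine Summable.of_nonneg_of_le (fun n => Real.log_nonneg (hu1 n)) (fun n => ?_) hgeo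
    have h2 : Real.log (u n) ≤ u n - 1 := Real.log_le_sub_one_of_pos (hupos n)
    have hne : (1:ℝ) - t ^ (n + 1) ≠ 0 := by linarith [htn n]
    have h3 : u n - 1 = t ^ (n + 1) / (1 - t ^ (n + 1)) := by
      simp only [hudef]
      field_simp
      ring
    have h4 : t ^ (n + 1) / (1 - t ^ (n + 1)) ≤ t ^ (n + 1) / (1 - t) := by
      gcongr
      · have := pow_le_pow_of_le_one ht0.le ht1.le
          (Nat.one_le_iff_ne_zero.mpr (Nat.succ_ne_zero n))
        simpa using this
    have h5 : t ^ (n + 1) / (1 - t) = (t / (1 - t)) * t ^ n := by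
      rw [pow_succ]; ring
    linarith
  -- the tprod P
  have hPrw : (∏' s : ℕ, (1 - q ^ (2 * (s + 1)))⁻¹) = ∏' s : ℕ, u s := by
    refine tprod_congr fun s => ?_
    simp only [hudef, htdef, ← pow_mul]
  rw [hPrw]
  set P : ℝ := ∏' s : ℕ, u s with hPdef
  have hu0P : u 0 ≤ P := by
    rw [hPdef]
    simpa using prod_le_tprod_real {0} hu1 humul
  have hP1 : 1 ≤ P := le_trans (hu1 0) hu0P
  have hP0 : 0 < P := lt_of_lt_of_le one_pos hP1
  -- step A: ratio as a product over range r
  have hfl : qfact q (l' + r) = qfact q l' * ∏ x ∈ range r, qint q (l' + x + 1) :=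
    qfact_add q l' r
  have hfm : qfact q (m' + r) = qfact q m' * ∏ x ∈ range r, qint q (m' + x + 1) :=
    qfact_add q m' r
  have hfk : qfact q (l' + m' + r + 1) =
      (qfact q (l' + m') * qint q (l' + m' + 1)) *
        ∏ x ∈ range r, qint q (l' + m' + 1 + x + 1) := by
    rw [show l' + m' + r + 1 = (l' + m' + 1) + r by omega, qfact_add q (l' + m' + 1) r]
    congr 1
    simp [qfact, Finset.prod_range_succ]
  have hfr : qfact q r = ∏ x ∈ range r, qint q (x + 1) := rfl
  have hne : ∀ n, qfact q n ≠ 0 := fun n => (qfact_pos h0 h1 n).ne'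
  have hqintne : ∀ n, qint q (n + 1) ≠ 0 := fun n => (qint_pos h0 h1 n).ne'
  have hBkne : (∏ x ∈ range r, qint q (l' + m' + 1 + x + 1)) ≠ 0 :=
    Finset.prod_ne_zero_iff.mpr fun x _ => hqintne _
  have hBrne : (∏ x ∈ range r, qint q (x + 1)) ≠ 0 :=
    Finset.prod_ne_zero_iff.mpr fun x _ => hqintne _
  have hA : qint q (l' + m' + 1) / qtheta q (l' + m') (l' + r) (m' + r) r =
      ∏ x ∈ range r, (qint q (l' + x + 1) * qint q (m' + x + 1) /
        (qint q (x + 1) * qint q (l' + m' + 1 + x + 1))) := by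
    rw [Finset.prod_div_distrib, Finset.prod_mul_distrib, Finset.prod_mul_distrib]
    rw [qtheta, show l' + r - r = l' by omega, show m' + r - r = m' by omega,
      hfl, hfm, hfk, hfr]
    have h1' := hne l'
    have h2' := hne m'
    have h3' := hne (l' + m')
    have h4' := hqintne (l' + m')
    field_simp
  -- per-factor bound
  have hfac : ∀ x : ℕ, qint q (l' + x + 1) * qint q (m' + x + 1) /
      (qint q (x + 1) * qint q (l' + m' + 1 + x + 1)) ≤ q * (u x * u (x + 1)) := by
    intro x
    have hD1 : (0:ℝ) < 1 - t ^ (x + 1) := by linarith [htn x]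
    have hD2 : (0:ℝ) < 1 - t ^ (l' + m' + 1 + x + 1) := by linarith [htn (l' + m' + 1 + x)]
    have hD2' : (0:ℝ) < 1 - t ^ (x + 1 + 1) := by linarith [htn (x + 1)]
    have hN1a : (0:ℝ) ≤ 1 - t ^ (l' + x + 1) := by linarith [htn (l' + x)]
    have hN1b : (1:ℝ) - t ^ (l' + x + 1) ≤ 1 := by linarith [htn0 (l' + x)]
    have hN2a : (0:ℝ) ≤ 1 - t ^ (m' + x + 1) := by linarith [htn (m' + x)]
    have hN2b : (1:ℝ) - t ^ (m' + x + 1) ≤ 1 := by linarith [htn0 (m' + x)]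
    have hid : qint q (l' + x + 1) * qint q (m' + x + 1) /
        (qint q (x + 1) * qint q (l' + m' + 1 + x + 1)) =
        q * (((1 - t ^ (l' + x + 1)) * (1 - t ^ (m' + x + 1))) /
          ((1 - t ^ (x + 1)) * (1 - t ^ (l' + m' + 1 + x + 1)))) := by
      rw [qint_formula h0 h1 (l' + x), qint_formula h0 h1 (m' + x),
        qint_formula h0 h1 x, qint_formula h0 h1 (l' + m' + 1 + x), ← htdef]
      field_simp
      ring
    rw [hid]
    apply mul_le_mul_of_nonneg_left _ h0.le
    have hpow : t ^ (l' + m' + 1 + x + 1) ≤ t ^ (x + 1 + 1) :=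
      pow_le_pow_of_le_one ht0.le ht1.le (by omega)
    have hN : (1 - t ^ (l' + x + 1)) * (1 - t ^ (m' + x + 1)) ≤ 1 := by nlinarith
    have aux : ((1 - t ^ (l' + x + 1)) * (1 - t ^ (m' + x + 1))) /
        ((1 - t ^ (x + 1)) * (1 - t ^ (l' + m' + 1 + x + 1))) ≤
        1 / ((1 - t ^ (x + 1)) * (1 - t ^ (x + 1 + 1))) := by
      apply div_le_div₀ zero_le_one hN (mul_pos hD1 hD2')
      apply mul_le_mul_of_nonneg_left (by linarith) hD1.le
    refine aux.trans_eq ?_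
    simp only [hudef, one_div, mul_inv]
  -- nonnegativity of the factors
  have hhnn : ∀ x ∈ range r, (0:ℝ) ≤ qint q (l' + x + 1) * qint q (m' + x + 1) /
      (qint q (x + 1) * qint q (l' + m' + 1 + x + 1)) := by
    intro x _
    have a1 := qint_pos h0 h1 (l' + x)
    have a2 := qint_pos h0 h1 (m' + x)
    have a3 := qint_pos h0 h1 x
    have a4 := qint_pos h0 h1 (l' + m' + 1 + x)
    positivity
  -- chain
  have hchain : qint q (l' + m' + 1) / qtheta q (l' + m') (l' + r) (m' + r) r ≤
      q ^ r * ((∏ x ∈ range r, u x) * (∏ x ∈ range r, u (x + 1))) := by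
    rw [hA]
    calc ∏ x ∈ range r, (qint q (l' + x + 1) * qint q (m' + x + 1) /
          (qint q (x + 1) * qint q (l' + m' + 1 + x + 1)))
        ≤ ∏ x ∈ range r, (q * (u x * u (x + 1))) :=
          Finset.prod_le_prod hhnn (fun x _ => hfac x)
      _ = q ^ r * ((∏ x ∈ range r, u x) * (∏ x ∈ range r, u (x + 1))) := by
          rw [Finset.prod_mul_distrib, Finset.prod_mul_distrib, Finset.prod_const, Finset.card_range]
  have hPu1 : (∏ x ∈ range r, u x) ≤ P := by
    rw [hPdef]; exact prod_le_tprod_real _ hu1 humul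
  have hPu2 : (∏ x ∈ range r, u (x + 1)) ≤ P := by
    calc (∏ x ∈ range r, u (x + 1)) ≤ (∏ x ∈ range r, u (x + 1)) * u 0 :=
          le_mul_of_one_le_right (prod_nonneg fun i _ => (hupos _).le) (hu1 0)
      _ = ∏ x ∈ range (r + 1), u x := (Finset.prod_range_succ' u r).symm
      _ ≤ P := by rw [hPdef]; exact prod_le_tprod_real _ hu1 humul
  have hprodnn2 : (0:ℝ) ≤ ∏ x ∈ range r, u (x + 1) := prod_nonneg fun i _ => (hupos _).le
  have hRP : qint q (l' + m' + 1) / qtheta q (l' + m') (l' + r) (m' + r) r ≤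
      q ^ r * (P * P) := by
    refine hchain.trans ?_
    apply mul_le_mul_of_nonneg_left _ (pow_nonneg h0.le r)
    exact mul_le_mul hPu1 hPu2 hprodnn2 hP0.le
  have hqr0 : (0:ℝ) < q ^ r := pow_pos h0 r
  have hc : 0 < qint q (r + 1) := qint_pos h0 h1 r
  -- key: qint (r+1) * q^r ≤ P
  have hkey : qint q (r + 1) * q ^ r ≤ P := by
    rw [qint_formula h0 h1 r, ← htdef, div_mul_cancel₀ _ hqr0.ne']
    have hstep : (1 - t ^ (r + 1)) / (1 - t) ≤ u 0 := by
      have h2 : (0:ℝ) < 1 - t := by nlinarith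
      have h3 : (1 - t ^ (r + 1)) / (1 - t) ≤ 1 / (1 - t) := by
        gcongr
        linarith [htn0 r]
      refine h3.trans_eq ?_
      simp [hudef]
    exact hstep.trans hu0P
  constructor
  · -- part 1
    refine hRP.trans ?_
    have hq2 : q ^ r ≤ P / qint q (r + 1) := by
      rw [le_div_iff₀ hc]
      calc q ^ r * qint q (r + 1) = qint q (r + 1) * q ^ r := by ring
        _ ≤ P := hkey
    calc q ^ r * (P * P) ≤ (P / qint q (r + 1)) * (P * P) :=
          mul_le_mul_of_nonneg_right hq2 (by positivity)
      _ = (1 / qint q (r + 1)) * P ^ 3 := by ring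
  · -- part 2
    have hexp : (l' + r + (m' + r) - (l' + m')) / 2 = r := by omega
    rw [hexp]
    refine hRP.trans ?_
    have hinv1 : (1:ℝ) ≤ (1 - t)⁻¹ := one_le_inv'' (by linarith) (by linarith)
    have h7 : 1 ≤ (1 - t)⁻¹ * P := le_trans hP1 (le_mul_of_one_le_left hP0.le hinv1)
    have h6 : P * P ≤ (1 - t)⁻¹ * P ^ 3 := by
      calc P * P = 1 * (P * P) := by ring
        _ ≤ ((1 - t)⁻¹ * P) * (P * P) :=
            mul_le_mul_of_nonneg_right h7 (mul_nonneg hP0.le hP0.le)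
        _ = (1 - t)⁻¹ * P ^ 3 := by ring
    calc q ^ r * (P * P) ≤ q ^ r * ((1 - t)⁻¹ * P ^ 3) :=
          mul_le_mul_of_nonneg_left h6 hqr0.le
      _ = ((1 - t)⁻¹ * P ^ 3) * q ^ r := by ring
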